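/- arXiv:2409.05498 — 6 statements merged into one kernel-verified Lean document; each statement's English description precedes it below -/
import Mathlib

section
/- From singular to stopwatch, forward simulation: Let G_S be an initialized singular game and let G_W be the stopwatch game obtained from G_S by the flow-normalization construction. Then the map γ1 : Q(G_S) → Q(G_W), γ1(l,v) = (l,v*), where v*(x) = v(x)/flow(l,x) if flow(l,x) ≠ 0 and v*(x) = v(x) otherwise, is an alternating simulation witnessing T(G_S) ≼ T(G_W). -/
/-!
Turn-based game structures, alternating simulation, and related notions,
following Dima, Hammami, Oualhadj, Laleau,
"Deciding the synthesis problem for hybrid games through bisimulation".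
-/

/-- A turn-based game structure over a set of observations `Obs`:
configurations (partitioned between Player 1 and Player 2 via `isP1`),
an initial Player-1 configuration, moves, a transition relation
(`trans p m p'` holds when the -- partial, possibly nondeterministic --
 transition function is defined on `(p, m)` with value `p'`),
and a labeling of configurations by observations. -/
structure TBGame (Obs : Type) where
  /-- configurations -/
  Conf : Type
  /-- moves -/
  Mv : Type
  /-- the configurations owned by Player 1 (the others belong to Player 2) -/
  isP1 : Conf → Prop
  /-- initial configuration -/
  init : Conf
  /-- the initial configuration belongs to Player 1 -/
  init_p1 : isP1 init
  /-- the transitions -/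
  trans : Conf → Mv → Conf → Prop
  /-- labeling of configurations with observations -/
  lbl : Conf → Obs

/-- `R` is an alternating simulation between `G1` and `G2`:
it relates only same-player configurations, preserves labels,
every Player-1 transition of `G1` from `p` is matched by some transition
of `G2` from `q` staying in `R`, and every Player-2 transition of `G2`
from `q` is matched by some transition of `G1` from `p` staying in `R`. -/
def IsAltSim {Obs : Type} (G1 G2 : TBGame Obs) (R : G1.Conf → G2.Conf → Prop) : Prop :=
  (∀ p q, R p q → G1.lbl p = G2.lbl q) ∧
  (∀ p q, R p q → (G1.isP1 p ↔ G2.isP1 q)) ∧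
  (∀ p q, R p q → G1.isP1 p →
      ∀ m p', G1.trans p m p' → ∃ m' q', G2.trans q m' q' ∧ R p' q') ∧
  (∀ p q, R p q → ¬ G1.isP1 p →
      ∀ m' q', G2.trans q m' q' → ∃ m p', G1.trans p m p' ∧ R p' q')

/-- `R` witnesses `T(G1) ≼ T(G2)` : `R` is an alternating simulation
containing the pair of initial configurations. -/
def Simulates {Obs : Type} (G1 G2 : TBGame Obs) (R : G1.Conf → G2.Conf → Prop) : Prop :=
  IsAltSim G1 G2 R ∧ R G1.init G2.init

/-- The data of an edge of a hybrid game: source and target locations, an action,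
a simple compact constraint assigning to each variable `x` the compact rational
interval `[lo x, hi x]`, and a reset function `rst : X → ℚ ∪ {⊥}`
(`none` meaning `⊥`, i.e. no reset). -/
structure EdgeData (L X Act : Type) where
  src : L
  act : Act
  lo : X → ℚ
  hi : X → ℚ
  rst : X → Option ℚ
  tgt : L

/-- An initialized singular game (ISR game): locations partitioned between the
two players, an initial Player-1 location, rational flows (slopes) for each
variable in each location, observations labeling the locations, and a set of
edges, subject to the initialization condition: any variable whose flow changes
across an edge is reset on that edge. -/
structure ISRGame (L X Act Obs : Type) where
  /-- the locations owned by Player 1 (the others belong to Player 2) -/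
  isL1 : L → Prop
  /-- initial location -/
  l0 : L
  l0_p1 : isL1 l0
  /-- labeling of locations with observations -/
  lbl : L → Obs
  /-- the slope of each variable in each location -/
  flow : L → X → ℚ
  /-- the edges -/
  E : Set (EdgeData L X Act)
  /-- initialization: whenever the flow of `x` differs between the two endpoints
  of an edge, `x` is reset on that edge -/
  initialized : ∀ e ∈ E, ∀ x, flow e.src x ≠ flow e.tgt x → e.rst x ≠ none

/-- The semantics `T(G)` of an ISR game `G` as a turn-based game structure:
configurations are pairs (location, valuation of the variables in `ℝ`),
the initial configuration is `(l0, 0)`, moves are pairs (action, nonnegative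
delay), and `(l,v) →⁽ᵃ'ᵗ⁾ (l',v')` whenever some edge `e = (l,a,φ_e,rst_e,l')`
satisfies `v x + t · flow l x ∈ φ_e x` for all `x`, `v' x = rst_e x` when
`rst_e x ≠ ⊥`, and `v' x = v x + t · flow l x` otherwise. -/
def ISRGame.semantics {L X Act Obs : Type} (G : ISRGame L X Act Obs) : TBGame Obs where
  Conf := L × (X → ℝ)
  Mv := Act × NNReal
  isP1 := fun c => G.isL1 c.1
  init := (G.l0, fun _ => 0)
  init_p1 := G.l0_p1
  lbl := fun c => G.lbl c.1
  trans := fun c m c' =>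
    ∃ e ∈ G.E, e.src = c.1 ∧ e.act = m.1 ∧ e.tgt = c'.1 ∧
      (∀ x, (e.lo x : ℝ) ≤ c.2 x + (m.2 : ℝ) * (G.flow c.1 x : ℝ) ∧
            c.2 x + (m.2 : ℝ) * (G.flow c.1 x : ℝ) ≤ (e.hi x : ℝ)) ∧
      (∀ x, c'.2 x =
        (e.rst x).elim (c.2 x + (m.2 : ℝ) * (G.flow c.1 x : ℝ)) (fun r => (r : ℝ)))

/-- The transformation of an edge of an initialized singular game into an edge
of the associated stopwatch game: the constraint of each variable is divided
by the flow of the variable in the source location (when nonzero; the division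
of a compact interval by a negative rational swaps its endpoints), and the reset
value of each reset variable is divided by the flow of the variable in the
target location (when nonzero). -/
def stopwatchEdge {L X Act Obs : Type} (G : ISRGame L X Act Obs)
    (e : EdgeData L X Act) : EdgeData L X Act where
  src := e.src
  act := e.act
  lo := fun x =>
    if G.flow e.src x = 0 then e.lo x
    else if 0 < G.flow e.src x then e.lo x / G.flow e.src x
    else e.hi x / G.flow e.src x
  hi := fun x =>
    if G.flow e.src x = 0 then e.hi x
    else if 0 < G.flow e.src x then e.hi x / G.flow e.src x
    else e.lo x / G.flow e.src x
  rst := fun x =>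
    (e.rst x).map (fun c => if G.flow e.tgt x = 0 then c else c / G.flow e.tgt x)
  tgt := e.tgt

/-- The initialized stopwatch game `G_W` obtained from an initialized singular
game `G_S` by flow normalization: the flow of each variable becomes `0` if it
was `0` and `1` otherwise, and constraints and resets are rescaled accordingly. -/
def stopwatchOf {L X Act Obs : Type} (G : ISRGame L X Act Obs) : ISRGame L X Act Obs where
  isL1 := G.isL1
  l0 := G.l0
  l0_p1 := G.l0_p1
  lbl := G.lbl
  flow := fun l x => if G.flow l x = 0 then 0 else 1
  E := stopwatchEdge G '' G.E
  initialized := by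
    rintro e ⟨e0, he0, rfl⟩ x hx
    have hne : G.flow e0.src x ≠ G.flow e0.tgt x := by
      intro h
      exact hx (by simp only [stopwatchEdge, h] <;> rfl)
    have h0 := G.initialized e0 he0 x hne
    simp only [stopwatchEdge]
    cases hr : e0.rst x with
    | none => exact absurd hr h0
    | some c => simp [hr]

/-- `stopwatchOf G` is indeed a stopwatch game : all flows are `0` or `1`. -/
theorem stopwatchOf_flow {L X Act Obs : Type} (G : ISRGame L X Act Obs) (l : L) (x : X) :
    (stopwatchOf G).flow l x = 0 ∨ (stopwatchOf G).flow l x = 1 := by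
  by_cases h : G.flow l x = 0 <;> simp [stopwatchOf, h]

/-- The transformed valuation `v*` : `v* x = v x / flow l x` when `flow l x ≠ 0`,
and `v* x = v x` otherwise. -/
noncomputable def vstar {L X : Type} (flow : L → X → ℚ) (l : L) (v : X → ℝ) : X → ℝ :=
  fun x => if flow l x = 0 then v x else v x / (flow l x : ℝ)

/-- The relation (graph of the map) `γ1 (l,v) = (l, v*)` between configurations
of `T(G_S)` and configurations of `T(G_W)`. -/
def gamma1 {L X Act Obs : Type} (G : ISRGame L X Act Obs) :
    (ISRGame.semantics G).Conf → (ISRGame.semantics (stopwatchOf G)).Conf → Prop :=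
  fun p q => q.1 = p.1 ∧ q.2 = vstar G.flow p.1 p.2

private lemma guard_aux_pos (f lo hi v t : ℝ) (hf : 0 < f) :
    (lo ≤ v + t * f ∧ v + t * f ≤ hi) ↔ (lo / f ≤ v / f + t ∧ v / f + t ≤ hi / f) := by
  have h : v / f + t = (v + t * f) / f := by field_simp
  rw [h, div_le_div_iff_of_pos_right hf, div_le_div_iff_of_pos_right hf]

private lemma guard_aux_neg (f lo hi v t : ℝ) (hf : f < 0) :
    (lo ≤ v + t * f ∧ v + t * f ≤ hi) ↔ (hi / f ≤ v / f + t ∧ v / f + t ≤ lo / f) := by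
  have h : v / f + t = (v + t * f) / f := by rw [div_add' _ _ _ hf.ne]
  rw [h, div_le_div_right_of_neg hf, div_le_div_right_of_neg hf, and_comm]

/-- Per-variable equivalence of the guard of an edge `e` of `G_S` at `(v, t)` with the
guard of the corresponding edge of `G_W` at `(v*, t)`. -/
private lemma guard_compat {L X Act Obs : Type} (G : ISRGame L X Act Obs)
    (e : EdgeData L X Act) (v : X → ℝ) (t : ℝ) (x : X) :
    ((e.lo x : ℝ) ≤ v x + t * (G.flow e.src x : ℝ) ∧
       v x + t * (G.flow e.src x : ℝ) ≤ (e.hi x : ℝ)) ↔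
    (((stopwatchEdge G e).lo x : ℝ) ≤
        vstar G.flow e.src v x + t * ((stopwatchOf G).flow e.src x : ℝ) ∧
      vstar G.flow e.src v x + t * ((stopwatchOf G).flow e.src x : ℝ) ≤
        ((stopwatchEdge G e).hi x : ℝ)) := by
  by_cases h0 : G.flow e.src x = 0
  · simp [stopwatchEdge, stopwatchOf, vstar, h0]
  · have hf : ((G.flow e.src x : ℝ)) ≠ 0 := by exact_mod_cast h0
    rcases lt_or_gt_of_ne h0 with hneg | hpos
    · have hneg' : ((G.flow e.src x : ℝ)) < 0 := by exact_mod_cast hneg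
      simp only [stopwatchEdge, stopwatchOf, vstar, h0, if_neg h0, if_neg (not_lt.mpr hneg.le),
        if_neg (lt_asymm hneg)]
      push_cast
      rw [guard_aux_neg _ _ _ _ _ hneg']
      simp [not_lt.mpr hneg.le]
    · have hpos' : (0:ℝ) < (G.flow e.src x : ℝ) := by exact_mod_cast hpos
      simp only [stopwatchEdge, stopwatchOf, vstar, h0, if_neg h0, if_pos hpos]
      push_cast
      rw [guard_aux_pos _ _ _ _ _ hpos']
      simp [hpos]

/-- Per-variable compatibility of the resets: the value obtained in `G_W` from `v*`
after delay `t` along `stopwatchEdge G e` is the `vstar`-image (at the target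
location) of the value obtained in `G_S` from `v` after delay `t` along `e`. -/
private lemma rst_compat {L X Act Obs : Type} (G : ISRGame L X Act Obs)
    (e : EdgeData L X Act) (he : e ∈ G.E) (v : X → ℝ) (t : ℝ) (x : X) :
    ((stopwatchEdge G e).rst x).elim
        (vstar G.flow e.src v x + t * ((stopwatchOf G).flow e.src x : ℝ))
        (fun r => (r : ℝ)) =
      vstar G.flow e.tgt
        (fun y => (e.rst y).elim (v y + t * (G.flow e.src y : ℝ)) (fun r => (r : ℝ))) x := by
  cases hr : e.rst x with
  | some r =>
      by_cases h : G.flow e.tgt x = 0 <;>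
        simp [stopwatchEdge, vstar, hr, h]
  | none =>
      have hflow : G.flow e.src x = G.flow e.tgt x := by
        by_contra hne; exact (G.initialized e he x hne) hr
      by_cases h : G.flow e.src x = 0
      · simp [stopwatchEdge, stopwatchOf, vstar, hr, h, ← hflow]
      · have hf : ((G.flow e.src x : ℝ)) ≠ 0 := by exact_mod_cast h
        simp only [stopwatchEdge, stopwatchOf, vstar, hr, Option.map_none, Option.elim,
          if_neg h, ← hflow]
        push_cast
        field_simp

/-- **From singular to stopwatch, forward simulation.** For every initialized
singular game `G_S`, the map `γ1 (l,v) = (l,v*)` (where `v* x = v x / flow l x`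
if `flow l x ≠ 0` and `v* x = v x` otherwise) is an alternating simulation
witnessing `T(G_S) ≼ T(G_W)`, `G_W` being the stopwatch game obtained from
`G_S` by flow normalization. -/
theorem singular_to_stopwatch_forward {L X Act Obs : Type}
    [Fintype L] [Fintype X] [Fintype Act] [Fintype Obs]
    (G : ISRGame L X Act Obs) (hE : G.E.Finite) :
    Simulates (ISRGame.semantics G) (ISRGame.semantics (stopwatchOf G)) (gamma1 G) := by
  constructor
  · refine ⟨?_, ?_, ?_, ?_⟩
    · rintro ⟨l, v⟩ ⟨lq, vq⟩ ⟨h1, h2⟩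
      simp only at h1; subst h1
      rfl
    · rintro ⟨l, v⟩ ⟨lq, vq⟩ ⟨h1, h2⟩
      simp only at h1; subst h1
      rfl
    · rintro ⟨l, v⟩ ⟨lq, vq⟩ ⟨h1, h2⟩ _ m ⟨l', v'⟩ ⟨e, he, hsrc, hact, htgt, hg, hr⟩
      simp only at h1 h2 hsrc htgt hg hr
      subst h1; subst h2; subst hsrc; subst htgt
      refine ⟨m, (e.tgt, vstar G.flow e.tgt v'),
        ⟨stopwatchEdge G e, ⟨e, he, rfl⟩, rfl, hact, rfl, ?_, ?_⟩, rfl, rfl⟩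
      · intro x
        exact (guard_compat G e v (m.2 : ℝ) x).mp (hg x)
      · intro x
        have hv' : v' = fun y => (e.rst y).elim
            (v y + (m.2 : ℝ) * (G.flow e.src y : ℝ)) (fun r => (r : ℝ)) :=
          funext fun y => hr y
        rw [hv']
        exact (rst_compat G e he v (m.2 : ℝ) x).symm
    · rintro ⟨l, v⟩ ⟨lq, vq⟩ ⟨h1, h2⟩ _ m' ⟨l', w'⟩
        ⟨e', ⟨e0, he0, rfl⟩, hsrc, hact, htgt, hg, hr⟩
      simp only at h1 h2 hsrc htgt hg hr
      subst h1; subst h2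
      have hsrc0 : e0.src = lq := hsrc
      have htgt0 : e0.tgt = l' := htgt
      subst hsrc0; subst htgt0
      refine ⟨m', (e0.tgt, fun y => (e0.rst y).elim
          (v y + (m'.2 : ℝ) * (G.flow e0.src y : ℝ)) (fun r => (r : ℝ))),
        ⟨e0, he0, rfl, hact, rfl, ?_, fun x => rfl⟩, rfl, ?_⟩
      · intro x
        exact (guard_compat G e0 v (m'.2 : ℝ) x).mpr (hg x)
      · funext x
        show w' x = _
        rw [hr x]
        exact rst_compat G e0 he0 v (m'.2 : ℝ) x
  · exact ⟨rfl, funext fun x => by simp [ISRGame.semantics, vstar]⟩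
end

section
/- From stopwatch to reset-annotated stopwatch, forward simulation: Let G_W be an initialized stopwatch game and let Ḡ_W be the reset-annotated stopwatch game obtained from G_W. Then the relation β1 = {((l,v), ((l,f_l),v)) : (l,v) ∈ Q(G_W), f_l : X → K ∪ {⊥}} between configurations of G_W and configurations of Ḡ_W with the same location component and the same valuation is an alternating simulation witnessing T(G_W) ≼ T(Ḡ_W). -/
/-- The reset-annotated stopwatch game `Ḡ_W` obtained from a stopwatch game
`G_W`: locations are pairs `(l, f)` where `f : X → ℚ ∪ {⊥}` records, for the
stopped variables, the constant to which they were last reset; the initial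
annotation is the constant function `0`; flows and labels are inherited; and
there is an edge `((l1,f1), a, φ, rst, (l2,f2))` whenever `(l1,a,φ,rst,l2)` is
an edge of `G_W` and, for every variable `x`: `f2 x = ⊥` if `flow l2 x = 1`;
`f2 x = rst x` if `flow l2 x = 0` and `rst x ≠ ⊥`; and `f2 x = f1 x` if
`flow l2 x = 0` and `rst x = ⊥`. -/
def annotateOf {L X Act Obs : Type} (G : ISRGame L X Act Obs) :
    ISRGame (L × (X → Option ℚ)) X Act Obs where
  isL1 := fun l => G.isL1 l.1
  l0 := (G.l0, fun _ => some 0)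
  l0_p1 := G.l0_p1
  lbl := fun l => G.lbl l.1
  flow := fun l x => G.flow l.1 x
  E := { eb | ∃ e ∈ G.E, eb.src.1 = e.src ∧ eb.tgt.1 = e.tgt ∧ eb.act = e.act ∧
        eb.lo = e.lo ∧ eb.hi = e.hi ∧ eb.rst = e.rst ∧
        ∀ x, (G.flow e.tgt x = 1 → eb.tgt.2 x = none) ∧
             (G.flow e.tgt x = 0 → e.rst x ≠ none → eb.tgt.2 x = e.rst x) ∧
             (G.flow e.tgt x = 0 → e.rst x = none → eb.tgt.2 x = eb.src.2 x) }
  initialized := by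
    rintro eb ⟨e, he, hsrc, htgt, hact, hlo, hhi, hrst, hf⟩ x hx
    try simp only at hx
    rw [hsrc, htgt] at hx
    rw [hrst]
    exact G.initialized e he x hx

/-- The relation `β1` pairing each configuration `(l,v)` of `T(G_W)` with every
configuration `((l,f),v)` of `T(Ḡ_W)` carrying the same location and the same
valuation. -/
def beta1 {L X Act Obs : Type} (G : ISRGame L X Act Obs) :
    (ISRGame.semantics G).Conf → (ISRGame.semantics (annotateOf G)).Conf → Prop :=
  fun p q => q.1.1 = p.1 ∧ q.2 = p.2

/-- **From stopwatch to reset-annotated stopwatch, forward simulation.** For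
every initialized stopwatch game `G_W` (an ISR game all of whose flows are `0`
or `1`), the relation `β1` pairing `(l, v)` with the configurations
`((l, f), v)` of the reset-annotated game `Ḡ_W` is an alternating simulation
witnessing `T(G_W) ≼ T(Ḡ_W)`. -/
theorem stopwatch_to_annotated_forward {L X Act Obs : Type}
    [Fintype L] [Fintype X] [Fintype Act] [Fintype Obs]
    (G : ISRGame L X Act Obs) (hE : G.E.Finite)
    (hsw : ∀ l x, G.flow l x = 0 ∨ G.flow l x = 1) :
    Simulates (ISRGame.semantics G) (ISRGame.semantics (annotateOf G)) (beta1 G) := by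
  constructor
  · refine ⟨?_, ?_, ?_, ?_⟩
    · rintro p q ⟨h1, h2⟩
      simp [ISRGame.semantics, annotateOf, h1]
    · rintro p q ⟨h1, h2⟩
      simp [ISRGame.semantics, annotateOf, h1]
    · rintro p q ⟨h1, h2⟩ _ m p' ⟨e, he, hsrc, hact, htgt, hcon, hval⟩
      classical
      refine ⟨m, ((p'.1, fun x => if G.flow e.tgt x = 1 then none
          else if e.rst x = none then q.1.2 x else e.rst x), p'.2), ?_, rfl, rfl⟩
      refine ⟨⟨q.1, e.act, e.lo, e.hi, e.rst,
        ((p'.1, fun x => if G.flow e.tgt x = 1 then none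
          else if e.rst x = none then q.1.2 x else e.rst x))⟩,
        ⟨e, he, by simp [h1, hsrc], by simp [htgt], rfl, rfl, rfl, rfl, ?_⟩,
        rfl, hact, rfl, ?_, ?_⟩
      · intro x
        refine ⟨fun hf => by simp [hf], fun hf hr => ?_, fun hf hr => ?_⟩
        · simp [hf, hr]
        · simp [hf, hr]
      · intro x
        simpa [annotateOf, h1, h2] using hcon x
      · intro x
        simpa [annotateOf, h1, h2] using hval x
    · rintro p q ⟨h1, h2⟩ _ m q' ⟨eb, ⟨e, he, hsrc, htgt, hact, hlo, hhi, hrst, hf⟩,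
        hsrc', hact', htgt', hcon, hval⟩
      refine ⟨m, (e.tgt, q'.2), ⟨e, he, ?_, ?_, ?_, ?_, ?_⟩, ?_, rfl⟩
      · rw [← hsrc, hsrc', h1]
      · rw [← hact, hact']
      · rfl
      · intro x
        have := hcon x
        rw [hlo, hhi] at this
        simpa [annotateOf, ← h1, ← h2, hsrc', ← hsrc] using this
      · intro x
        have := hval x
        rw [hrst] at this
        simpa [annotateOf, ← h1, ← h2, hsrc', ← hsrc] using this
      · exact (congrArg (fun l => l.1) htgt').symm.trans htgt
  · exact ⟨rfl, rfl⟩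
end

section
/- From reset-annotated stopwatch back to stopwatch, backward simulation: Let G_W be an initialized stopwatch game and let Ḡ_W be the reset-annotated stopwatch game obtained from G_W. Then the relation β1⁻¹ = {(((l,f_l),v), (l,v)) : ((l,f_l),v) ∈ Q(Ḡ_W)} is an alternating simulation witnessing T(Ḡ_W) ≼ T(G_W); consequently T(G_W) and T(Ḡ_W) are alternating bisimilar. -/
/-- `T(G1)` and `T(G2)` are alternating bisimilar: some relation `R` witnesses
`T(G1) ≼ T(G2)` and its inverse `R⁻¹` witnesses `T(G2) ≼ T(G1)`. -/
def Bisimilar {Obs : Type} (G1 G2 : TBGame Obs) : Prop :=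
  ∃ R : G1.Conf → G2.Conf → Prop,
    Simulates G1 G2 R ∧ Simulates G2 G1 (fun q p => R p q)

/-- Projection: a transition of the annotated game yields one of `G`. -/
lemma beta1_proj {L X Act Obs : Type} (G : ISRGame L X Act Obs)
    (p : (ISRGame.semantics G).Conf) (q : (ISRGame.semantics (annotateOf G)).Conf)
    (hpq : beta1 G p q) (m : Act × NNReal)
    (q' : (ISRGame.semantics (annotateOf G)).Conf)
    (h : (ISRGame.semantics (annotateOf G)).trans q m q') :
    (ISRGame.semantics G).trans p m (q'.1.1, q'.2) ∧ beta1 G (q'.1.1, q'.2) q' := by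
  obtain ⟨hq1, hq2⟩ := hpq
  obtain ⟨eb, ⟨e, he, hsrc, htgt, hact, hlo, hhi, hrst, _⟩, hs, ha, ht, hg, hr⟩ := h
  refine ⟨⟨e, he, ?_, ?_, ?_, ?_, ?_⟩, rfl, rfl⟩
  · rw [← hsrc, hs, hq1]
  · rw [← hact, ha]
  · rw [← htgt, ht]
  · intro x
    have := hg x
    simp only [annotateOf] at this
    rw [← hq1, ← hq2, ← hlo, ← hhi]
    exact this
  · intro x
    have := hr x
    simp only [annotateOf] at this
    rw [← hq1, ← hq2, ← hrst]
    exact this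

/-- Lifting: a transition of `G` is matched by the annotated game. -/
lemma beta1_lift {L X Act Obs : Type} (G : ISRGame L X Act Obs)
    (hsw : ∀ l x, G.flow l x = 0 ∨ G.flow l x = 1)
    (p : (ISRGame.semantics G).Conf) (q : (ISRGame.semantics (annotateOf G)).Conf)
    (hpq : beta1 G p q) (m : Act × NNReal) (p' : (ISRGame.semantics G).Conf)
    (h : (ISRGame.semantics G).trans p m p') :
    ∃ q', (ISRGame.semantics (annotateOf G)).trans q m q' ∧ beta1 G p' q' := by
  obtain ⟨hq1, hq2⟩ := hpq
  obtain ⟨e, he, hsrc, hact, htgt, hg, hr⟩ := h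
  set f2 : X → Option ℚ := fun x =>
    if G.flow e.tgt x = 1 then none else if e.rst x = none then q.1.2 x else e.rst x
    with hf2
  refine ⟨((p'.1, f2), p'.2), ⟨⟨q.1, m.1, e.lo, e.hi, e.rst, (e.tgt, f2)⟩,
    ⟨e, he, ?_, rfl, hact.symm, rfl, rfl, rfl, ?_⟩, rfl, rfl, ?_, ?_, ?_⟩, rfl, rfl⟩
  · simpa [hq1] using hsrc.symm
  · intro x
    refine ⟨fun h1 => by simp [hf2, h1], fun h0 hrn => ?_, fun h0 hrn => ?_⟩
    · have : G.flow e.tgt x ≠ 1 := by rw [h0]; norm_num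
      simp [hf2, this, hrn]
    · have : G.flow e.tgt x ≠ 1 := by rw [h0]; norm_num
      simp [hf2, this, hrn]
  · simp [htgt]
  · intro x
    have := hg x
    simp only [annotateOf]
    rw [hq1, hq2]
    exact this
  · intro x
    have := hr x
    simp only [annotateOf]
    rw [hq1, hq2]
    exact this

/-- **From reset-annotated stopwatch back to stopwatch, backward simulation.**
For every initialized stopwatch game `G_W` with reset-annotated version `Ḡ_W`,
the inverse relation `β1⁻¹ = {(((l,f),v), (l,v))}` is an alternating simulation
witnessing `T(Ḡ_W) ≼ T(G_W)`; consequently `T(G_W)` and `T(Ḡ_W)` are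
alternating bisimilar. -/
theorem annotated_to_stopwatch_backward {L X Act Obs : Type}
    [Fintype L] [Fintype X] [Fintype Act] [Fintype Obs]
    (G : ISRGame L X Act Obs) (hE : G.E.Finite)
    (hsw : ∀ l x, G.flow l x = 0 ∨ G.flow l x = 1) :
    Simulates (ISRGame.semantics (annotateOf G)) (ISRGame.semantics G)
      (fun q p => beta1 G p q) ∧
    Bisimilar (ISRGame.semantics G) (ISRGame.semantics (annotateOf G)) := by
  have hback : Simulates (ISRGame.semantics (annotateOf G)) (ISRGame.semantics G)
      (fun q p => beta1 G p q) := by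
    refine ⟨⟨?_, ?_, ?_, ?_⟩, rfl, rfl⟩
    · rintro q p ⟨h1, _⟩
      simp only [ISRGame.semantics, annotateOf, h1]
    · rintro q p ⟨h1, _⟩
      simp only [ISRGame.semantics, annotateOf, h1]
    · rintro q p hpq _ m q' h
      obtain ⟨ht, hb⟩ := beta1_proj G p q hpq m q' h
      exact ⟨m, _, ht, hb⟩
    · rintro q p hpq _ m' p' h
      obtain ⟨q', ht, hb⟩ := beta1_lift G hsw p q hpq m' p' h
      exact ⟨m', q', ht, hb⟩
  have hfwd : Simulates (ISRGame.semantics G) (ISRGame.semantics (annotateOf G))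
      (beta1 G) := by
    refine ⟨⟨?_, ?_, ?_, ?_⟩, rfl, rfl⟩
    · rintro p q ⟨h1, _⟩
      simp only [ISRGame.semantics, annotateOf, h1]
    · rintro p q ⟨h1, _⟩
      simp only [ISRGame.semantics, annotateOf, h1]
    · rintro p q hpq _ m p' h
      obtain ⟨q', ht, hb⟩ := beta1_lift G hsw p q hpq m p' h
      exact ⟨m, q', ht, hb⟩
    · rintro p q hpq _ m' q' h
      obtain ⟨ht, hb⟩ := beta1_proj G p q hpq m' q' h
      exact ⟨m', _, ht, hb⟩
  exact ⟨hback, beta1 G, hfwd, hback⟩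
end

section
/- From updatable timed to timed, forward simulation: Let G_U be an updatable timed game and let G_T be the timed game obtained from G_U by the offset construction. Then the relation γ2 = {((l,v), ((l,g_l), v^t)) : (l,v) ∈ Q(G_U), g_l : X → K_U, and v^t(x) = v(x) − g_l(x) for all x ∈ X} is an alternating simulation witnessing T(G_U) ≼ T(G_T). -/
/-- The timed game `G_T` obtained from an updatable timed game `G_U` by the
offset construction: locations are pairs `(l, g)` where `g : X → ℚ` records an
offset for each clock, the initial offset being `0`; for every edge
`e = (l1, a, φ_e, rst_e, l2)` of `G_U` and every offset `g1` there is an edge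
from `(l1, g1)` to `(l2, g2)` whose constraint is `φ_e x − g1 x` for every `x`,
which resets (to `0`) exactly the clocks `x` with `rst_e x ≠ ⊥`, and where
`g2 x = rst_e x` when `rst_e x ≠ ⊥` and `g2 x = g1 x` otherwise. -/
def timedOf {L X Act Obs : Type} (G : ISRGame L X Act Obs) :
    ISRGame (L × (X → ℚ)) X Act Obs where
  isL1 := fun l => G.isL1 l.1
  l0 := (G.l0, fun _ => 0)
  l0_p1 := G.l0_p1
  lbl := fun l => G.lbl l.1
  flow := fun _ _ => 1
  E := { et | ∃ e ∈ G.E, et.src.1 = e.src ∧ et.tgt.1 = e.tgt ∧ et.act = e.act ∧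
        (∀ x, et.lo x = e.lo x - et.src.2 x ∧ et.hi x = e.hi x - et.src.2 x) ∧
        (∀ x, et.rst x = (e.rst x).map (fun _ => (0 : ℚ))) ∧
        (∀ x, et.tgt.2 x = (e.rst x).getD (et.src.2 x)) }
  initialized := by
    rintro et het x hx
    exact absurd rfl hx

/-- The relation `γ2` pairing a configuration `(l, v)` of `T(G_U)` with every
configuration `((l, g), vᵗ)` of `T(G_T)` such that `vᵗ x = v x − g x` for all `x`. -/
def gamma2 {L X Act Obs : Type} (G : ISRGame L X Act Obs) :
    (ISRGame.semantics G).Conf → (ISRGame.semantics (timedOf G)).Conf → Prop :=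
  fun p q => q.1.1 = p.1 ∧ ∀ x, q.2 x = p.2 x - (q.1.2 x : ℝ)

/-- **From updatable timed to timed, forward simulation.** For every updatable
timed game `G_U` (an ISR game all of whose flows are `1`) and the timed game
`G_T` obtained from it by the offset construction, the relation `γ2` pairing
`(l, v)` with the configurations `((l, g), vᵗ)` such that `vᵗ x = v x − g x`
for all `x` is an alternating simulation witnessing `T(G_U) ≼ T(G_T)`. -/
theorem updatable_to_timed_forward {L X Act Obs : Type}
    [Fintype L] [Fintype X] [Fintype Act] [Fintype Obs]
    (G : ISRGame L X Act Obs) (hE : G.E.Finite)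
    (hflow : ∀ l x, G.flow l x = 1) :
    Simulates (ISRGame.semantics G) (ISRGame.semantics (timedOf G)) (gamma2 G) := by
  refine ⟨⟨?_, ?_, ?_, ?_⟩, ?_⟩
  · rintro p q ⟨h1, _⟩
    simp [ISRGame.semantics, timedOf, h1]
  · rintro p q ⟨h1, _⟩
    simp [ISRGame.semantics, timedOf, h1]
  · rintro p q ⟨h1, h2⟩ _ m p' ⟨e, he, hsrc, hact, htgt, hcon, hrst⟩
    -- forward direction
    refine ⟨m, ((e.tgt, fun x => (e.rst x).getD (q.1.2 x)),
        fun x => ((e.rst x).map (fun _ => (0:ℚ))).elim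
          (q.2 x + (m.2 : ℝ) * 1) (fun r => (r : ℝ))), ?_, ?_, ?_⟩
    · refine ⟨⟨q.1, e.act, fun x => e.lo x - q.1.2 x, fun x => e.hi x - q.1.2 x,
          fun x => (e.rst x).map (fun _ => (0:ℚ)), (e.tgt, fun x => (e.rst x).getD (q.1.2 x))⟩,
        ⟨e, he, by simp [h1, hsrc], rfl, rfl, fun x => ⟨rfl, rfl⟩, fun x => rfl, fun x => rfl⟩,
        rfl, hact, rfl, ?_, ?_⟩
      · intro x
        have hc := hcon x
        have hf := hflow p.1 x
        rw [hf] at hc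
        push_cast at hc ⊢
        simp [ISRGame.semantics, timedOf]
        constructor <;> [linarith [hc.1, h2 x]; linarith [hc.2, h2 x]]
      · intro x
        simp [ISRGame.semantics, timedOf]
    · exact htgt
    · intro x
      have hr := hrst x
      have hf := hflow p.1 x
      rw [hf] at hr
      cases hrx : e.rst x with
      | none =>
        simp [hrx] at hr ⊢
        rw [hr, h2 x]
        push_cast
        ring
      | some r =>
        simp [hrx] at hr ⊢
        rw [hr]
        simp
  · rintro p q ⟨h1, h2⟩ _ m' q' ⟨et, ⟨e, he, hsrc, htgt, hact, hcon0, hrst0, hg2⟩,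
      hets, hact', hettgt, hcon, hrst⟩
    -- backward direction
    refine ⟨m', (e.tgt, fun x => (e.rst x).elim (p.2 x + (m'.2 : ℝ) * (G.flow p.1 x : ℝ))
        (fun r => (r : ℝ))), ⟨e, he, by rw [← hsrc, hets, h1], by rw [← hact, hact'], rfl,
        ?_, fun x => rfl⟩, ?_, ?_⟩
    · intro x
      have hc := hcon x
      have hlo := (hcon0 x).1
      have hhi := (hcon0 x).2
      have hf := hflow p.1 x
      rw [hf]
      rw [hlo, hhi, hets] at hc
      have h2x := h2 x
      push_cast at hc h2x ⊢
      simp [ISRGame.semantics, timedOf] at hc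
      constructor <;> [linarith [hc.1]; linarith [hc.2]]
    · rw [← hettgt, htgt]
    · intro x
      have hr := hrst x
      have hr0 := hrst0 x
      have hg := hg2 x
      rw [hr0] at hr
      have h2x := h2 x
      rw [hets] at hg
      rw [hettgt] at hg
      rw [hg]
      cases hrx : e.rst x with
      | none =>
        simp only [hrx, Option.map_none, Option.elim_none, Option.getD_none] at hr ⊢
        rw [hr, h2 x, hflow p.1 x]
        simp only [timedOf]
        push_cast
        ring
      | some r =>
        simp only [hrx, Option.map_some, Option.elim_some, Option.getD_some] at hr ⊢
        rw [hr]
        simp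
  · exact ⟨rfl, fun x => by simp [ISRGame.semantics, timedOf]⟩
end

section
/- From timed back to updatable timed, backward simulation: Let G_U be an updatable timed game and let G_T be the timed game obtained from G_U by the offset construction. Then the relation γ2⁻¹ = {(((l,g_l), v^t), (l,v)) : ((l,g_l),v^t) ∈ Q(G_T) and v(x) = v^t(x) + g_l(x) for all x ∈ X} is an alternating simulation witnessing T(G_T) ≼ T(G_U); consequently T(G_U) and T(G_T) are alternating bisimilar. -/
/-- Matching a transition of `G_T` by a transition of `G_U`. -/
lemma stepTU {L X Act Obs : Type} (G : ISRGame L X Act Obs)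
    (hflow : ∀ l x, G.flow l x = 1)
    {p : (ISRGame.semantics G).Conf} {q : (ISRGame.semantics (timedOf G)).Conf}
    (h1 : p.1 = q.1.1) (h2 : ∀ x, p.2 x = q.2 x + (q.1.2 x : ℝ))
    (m : Act × NNReal) (q' : (ISRGame.semantics (timedOf G)).Conf)
    (hq : (ISRGame.semantics (timedOf G)).trans q m q') :
    ∃ p', (ISRGame.semantics G).trans p m p' ∧
      p'.1 = q'.1.1 ∧ ∀ x, p'.2 x = q'.2 x + (q'.1.2 x : ℝ) := by
  obtain ⟨et, ⟨e, he, hsrc, htgt, hact, hloHi, hrst, hg⟩, hqsrc, hqact, hqtgt, hcon, hval⟩ := hq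
  refine ⟨(e.tgt, fun x => (e.rst x).elim (p.2 x + (m.2 : ℝ)) (fun r => (r : ℝ))),
    ⟨e, he, ?_, by rw [← hact, hqact], rfl, ?_, ?_⟩, ?_, ?_⟩
  · rw [← hsrc, hqsrc, h1]
  · intro x
    have hc := hcon x
    have hlo := (hloHi x).1
    have hhi := (hloHi x).2
    have : (timedOf G).flow q.1 x = 1 := rfl
    rw [this] at hc
    rw [hflow]
    have := hc.1
    have := hc.2
    constructor
    · have h := hc.1
      rw [hlo, hqsrc] at h
      push_cast at h ⊢
      rw [h2 x]
      linarith
    · have h := hc.2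
      rw [hhi, hqsrc] at h
      push_cast at h ⊢
      rw [h2 x]
      linarith
  · intro x
    rw [hflow]
    simp
  · exact htgt ▸ (hqtgt ▸ rfl)
  · intro x
    have hv := hval x
    have hfl : (timedOf G).flow q.1 x = 1 := rfl
    rw [hfl, hrst x] at hv
    have hgx := hg x
    show (e.rst x).elim (p.2 x + (m.2 : ℝ)) (fun r => (r : ℝ)) = q'.2 x + ((q'.1.2 x : ℚ) : ℝ)
    rw [← hqtgt, hgx]
    cases hre : e.rst x with
    | none =>
        rw [hre] at hv
        simp only [Option.map_none, Option.elim_none, Option.getD_none] at hv ⊢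
        rw [hv, hqsrc, h2 x]
        push_cast
        ring
    | some r =>
        rw [hre] at hv
        simp only [Option.map_some, Option.elim_some, Option.getD_some] at hv ⊢
        rw [hv]
        simp

/-- Matching a transition of `G_U` by a transition of `G_T`. -/
lemma stepUT {L X Act Obs : Type} (G : ISRGame L X Act Obs)
    (hflow : ∀ l x, G.flow l x = 1)
    {p : (ISRGame.semantics G).Conf} {q : (ISRGame.semantics (timedOf G)).Conf}
    (h1 : p.1 = q.1.1) (h2 : ∀ x, p.2 x = q.2 x + (q.1.2 x : ℝ))
    (m : Act × NNReal) (p' : (ISRGame.semantics G).Conf)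
    (hp : (ISRGame.semantics G).trans p m p') :
    ∃ q', (ISRGame.semantics (timedOf G)).trans q m q' ∧
      p'.1 = q'.1.1 ∧ ∀ x, p'.2 x = q'.2 x + (q'.1.2 x : ℝ) := by
  obtain ⟨e, he, hsrc, hact, htgt, hcon, hval⟩ := hp
  set et : EdgeData (L × (X → ℚ)) X Act :=
    ⟨q.1, e.act, fun x => e.lo x - q.1.2 x, fun x => e.hi x - q.1.2 x,
      fun x => (e.rst x).map (fun _ => (0 : ℚ)),
      (e.tgt, fun x => (e.rst x).getD (q.1.2 x))⟩ with het_def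
  have hetE : et ∈ (timedOf G).E := ⟨e, he, by show q.1.1 = e.src; rw [← h1]; exact hsrc.symm, rfl, rfl,
    fun x => ⟨rfl, rfl⟩, fun x => rfl, fun x => rfl⟩
  refine ⟨(et.tgt, fun x => (et.rst x).elim (q.2 x + (m.2 : ℝ)) (fun r => (r : ℝ))),
    ⟨et, hetE, rfl, hact, rfl, ?_, ?_⟩, ?_, ?_⟩
  · intro x
    have hc := hcon x
    rw [hflow] at hc
    have hfl : (timedOf G).flow q.1 x = 1 := rfl
    rw [hfl]
    have h2x := h2 x
    rw [h2x] at hc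
    constructor
    · show ((e.lo x - q.1.2 x : ℚ) : ℝ) ≤ _
      push_cast
      push_cast at hc
      linarith [hc.1]
    · show _ ≤ ((e.hi x - q.1.2 x : ℚ) : ℝ)
      push_cast
      push_cast at hc
      linarith [hc.2]
  · intro x
    have hfl : (timedOf G).flow q.1 x = 1 := rfl
    rw [hfl]
    simp
  · rw [← htgt]
  · intro x
    have hv := hval x
    rw [hflow] at hv
    rw [hv]
    show (e.rst x).elim (p.2 x + (m.2 : ℝ) * ((1 : ℚ) : ℝ)) (fun r => (r : ℝ)) =
      ((e.rst x).map (fun _ => (0 : ℚ))).elim (q.2 x + (m.2 : ℝ)) (fun r => (r : ℝ)) +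
        ((e.rst x).getD (q.1.2 x) : ℝ)
    cases e.rst x with
    | none =>
        simp only [Option.map_none, Option.elim_none, Option.getD_none]
        rw [h2 x]
        push_cast
        ring
    | some r =>
        simp

/-- **From timed back to updatable timed, backward simulation.** For every
updatable timed game `G_U` with associated timed game `G_T`, the inverse
relation `γ2⁻¹ = {(((l,g), vᵗ), (l,v)) : v x = vᵗ x + g x for all x}` is an
alternating simulation witnessing `T(G_T) ≼ T(G_U)`; consequently `T(G_U)` and
`T(G_T)` are alternating bisimilar. -/
theorem timed_to_updatable_backward {L X Act Obs : Type}
    [Fintype L] [Fintype X] [Fintype Act] [Fintype Obs]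
    (G : ISRGame L X Act Obs) (hE : G.E.Finite)
    (hflow : ∀ l x, G.flow l x = 1) :
    Simulates (ISRGame.semantics (timedOf G)) (ISRGame.semantics G)
      (fun q p => p.1 = q.1.1 ∧ ∀ x, p.2 x = q.2 x + (q.1.2 x : ℝ)) ∧
    Bisimilar (ISRGame.semantics G) (ISRGame.semantics (timedOf G)) := by
  have hsimTU : Simulates (ISRGame.semantics (timedOf G)) (ISRGame.semantics G)
      (fun q p => p.1 = q.1.1 ∧ ∀ x, p.2 x = q.2 x + (q.1.2 x : ℝ)) := by
    refine ⟨⟨?_, ?_, ?_, ?_⟩, ?_⟩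
    · rintro q p ⟨h1, _⟩
      show G.lbl q.1.1 = G.lbl p.1
      rw [h1]
    · rintro q p ⟨h1, _⟩
      show G.isL1 q.1.1 ↔ G.isL1 p.1
      rw [h1]
    · rintro q p ⟨h1, h2⟩ _ m q' hq
      obtain ⟨p', hp, hr1, hr2⟩ := stepTU G hflow h1 h2 m q' hq
      exact ⟨m, p', hp, hr1, hr2⟩
    · rintro q p ⟨h1, h2⟩ _ m p' hp
      obtain ⟨q', hq, hr1, hr2⟩ := stepUT G hflow h1 h2 m p' hp
      exact ⟨m, q', hq, hr1, hr2⟩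
    · exact ⟨rfl, fun x => by show (0:ℝ) = 0 + ((0:ℚ):ℝ); norm_num⟩
  refine ⟨hsimTU, ⟨fun p q => p.1 = q.1.1 ∧ ∀ x, p.2 x = q.2 x + (q.1.2 x : ℝ), ?_, hsimTU⟩⟩
  refine ⟨⟨?_, ?_, ?_, ?_⟩, ?_⟩
  · rintro p q ⟨h1, _⟩
    show G.lbl p.1 = G.lbl q.1.1
    rw [h1]
  · rintro p q ⟨h1, _⟩
    show G.isL1 p.1 ↔ G.isL1 q.1.1
    rw [h1]
  · rintro p q ⟨h1, h2⟩ _ m p' hp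
    obtain ⟨q', hq, hr1, hr2⟩ := stepUT G hflow h1 h2 m p' hp
    exact ⟨m, q', hq, hr1, hr2⟩
  · rintro p q ⟨h1, h2⟩ _ m q' hq
    obtain ⟨p', hp, hr1, hr2⟩ := stepTU G hflow h1 h2 m q' hq
    exact ⟨m, p', hp, hr1, hr2⟩
  · exact ⟨rfl, fun x => by show (0:ℝ) = 0 + ((0:ℚ):ℝ); norm_num⟩
end

section
/- Well-definedness of matched transitions in the updatable-to-timed reduction: Let G_U be an updatable timed game and G_T the timed game obtained from it by the offset construction. For every configuration (l,v) of G_U related by γ2 to a configuration ((l,g_l),v^t) of G_T (i.e., v^t(x) = v(x) − g_l(x) for all x), and every move m = (a,t) with t ≥ 0 such that δ_U((l,v),m) = (l',v') is defined, the transition δ_T(((l,g_l),v^t),m) = ((l',g_{l'}),(v^t + t)[r := 0]) is defined along the corresponding edge, and the resulting pair of configurations is again related by γ2, i.e., (v^t+t)[r:=0](x) = v'(x) − g_{l'}(x) for all x ∈ X. -/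
/-- **Well-definedness of matched transitions in the updatable-to-timed
reduction.** For every configuration `(l, v)` of the updatable timed game `G_U`
related by `γ2` to a configuration `((l, g), vᵗ)` of the timed game `G_T`
(i.e. `vᵗ x = v x − g x` for all `x`), and every move `m = (a, t)` with `t ≥ 0`
such that `δ_U((l,v), m) = (l', v')` is defined, the transition of `T(G_T)`
from `((l, g), vᵗ)` by `m` along the corresponding edge is defined, reaching
`((l', g'), (vᵗ + t)[r := 0])`, and the resulting pair of configurations is
again related by `γ2`: `(vᵗ + t)[r := 0] x = v' x − g' x` for all `x`. -/
theorem timed_transition_well_defined {L X Act Obs : Type}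
    [Fintype L] [Fintype X] [Fintype Act] [Fintype Obs]
    (G : ISRGame L X Act Obs) (hE : G.E.Finite)
    (hflow : ∀ l x, G.flow l x = 1)
    (l : L) (v : X → ℝ) (g : X → ℚ) (vt : X → ℝ)
    (hvt : ∀ x, vt x = v x - (g x : ℝ))
    (m : Act × NNReal) (l' : L) (v' : X → ℝ)
    (h : (ISRGame.semantics G).trans (l, v) m (l', v')) :
    ∃ g' : X → ℚ,
      (ISRGame.semantics (timedOf G)).trans
        ((l, g), vt) m ((l', g'), fun x => v' x - (g' x : ℝ)) := by
  obtain ⟨e, heE, hsrc, hact, htgt, hcon, hrst⟩ := h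
  simp only at hsrc hact htgt hcon hrst
  refine ⟨fun x => (e.rst x).getD (g x),
    ⟨{ src := ((l, g)), act := m.1, lo := fun x => e.lo x - g x,
       hi := fun x => e.hi x - g x,
       rst := fun x => (e.rst x).map (fun _ => (0 : ℚ)),
       tgt := (l', fun x => (e.rst x).getD (g x)) }, ?_, rfl, rfl, rfl, ?_, ?_⟩⟩
  · exact ⟨e, heE, hsrc.symm, htgt.symm, hact.symm, fun x => ⟨rfl, rfl⟩, fun x => rfl, fun x => rfl⟩
  · intro x
    have hc := hcon x
    rw [hflow] at hc
    push_cast at hc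
    constructor
    · have := hc.1
      simp only [timedOf, hvt x]
      push_cast
      linarith
    · have := hc.2
      simp only [timedOf, hvt x]
      push_cast
      linarith
  · intro x
    have hv' := hrst x
    rw [hflow] at hv'
    simp only [timedOf]
    cases hr : e.rst x with
    | none =>
      simp only [hr, Option.map_none, Option.elim, Option.getD, hvt x]
      rw [hv', hr]
      simp
      ring
    | some r =>
      simp only [hr, Option.map_some, Option.elim, Option.getD]
      rw [hv', hr]
      simp
end
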